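/- arXiv:2209.14900 — 5 statements merged into one kernel-verified Lean document; each statement's English description precedes it below -/
import Mathlib

section
/- Consider N devices with channel gains gₙ > 0, noise density N₀ > 0, data sizes dₙ > 0, minimum rates rₙ^min > 0, power bounds 0 ≤ pₙ^min ≤ pₙ^max, total bandwidth B_tot > 0, and a constant w > 0. Let S = {(p, B) ∈ ℝᴺ × ℝᴺ : for all n, pₙ^min ≤ pₙ ≤ pₙ^max, Bₙ > 0, Gₙ(pₙ, Bₙ) ≥ rₙ^min, and Σₙ Bₙ ≤ B_tot}. Suppose (p*, B*, β*) minimizes w·Σₙ βₙ over the set {(p, B, β) : (p, B) ∈ S and pₙ·dₙ − βₙ·Gₙ(pₙ, Bₙ) ≤ 0 for all n}. Define νₙ* = w / Gₙ(pₙ*, Bₙ*) and β̂ₙ = pₙ*·dₙ / Gₙ(pₙ*, Bₙ*). Then (p*, B*) minimizes the function (p, B) ↦ Σₙ νₙ*·(pₙ·dₙ − β̂ₙ·Gₙ(pₙ, Bₙ)) over S. -/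
open Finset

set_option maxHeartbeats 1000000

/-- Two-point concavity of (p,B) ↦ B · logb 2 (1 + c·p/B). -/
lemma G_concave_seg (c : ℝ) (hc : 0 < c) (p₁ p₂ B₁ B₂ l : ℝ)
    (hp₁ : 0 ≤ p₁) (hp₂ : 0 ≤ p₂) (hB₁ : 0 < B₁) (hB₂ : 0 < B₂)
    (hl0 : 0 ≤ l) (hl1 : l ≤ 1) :
    (1 - l) * (B₁ * Real.logb 2 (1 + c * p₁ / B₁)) +
      l * (B₂ * Real.logb 2 (1 + c * p₂ / B₂)) ≤
    ((1 - l) * B₁ + l * B₂) *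
      Real.logb 2 (1 + c * ((1 - l) * p₁ + l * p₂) / ((1 - l) * B₁ + l * B₂)) := by
  have hBb : 0 < (1 - l) * B₁ + l * B₂ := by
    rcases eq_or_lt_of_le hl0 with h | h
    · simp [← h, hB₁]
    · have h1 : 0 < l * B₂ := mul_pos h hB₂
      have h2 : 0 ≤ (1 - l) * B₁ := mul_nonneg (by linarith) hB₁.le
      linarith
  set Bb := (1 - l) * B₁ + l * B₂ with hBbdef
  set μ := (1 - l) * B₁ / Bb with hμdef
  have hμ0 : 0 ≤ μ := div_nonneg (mul_nonneg (by linarith) hB₁.le) hBb.le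
  have hμ' : 1 - μ = l * B₂ / Bb := by
    field_simp [hμdef]
    have h : μ * Bb = (1 - l) * B₁ := by rw [hμdef, div_mul_cancel₀ _ hBb.ne']
    linarith
  have hμ1 : 0 ≤ 1 - μ := by
    rw [hμ']; exact div_nonneg (mul_nonneg hl0 hB₂.le) hBb.le
  have hx₁ : (0:ℝ) < 1 + c * p₁ / B₁ := by positivity
  have hx₂ : (0:ℝ) < 1 + c * p₂ / B₂ := by positivity
  have hlog := (strictConcaveOn_log_Ioi.concaveOn).2 (Set.mem_Ioi.2 hx₁) (Set.mem_Ioi.2 hx₂)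
      hμ0 hμ1 (by ring)
  have hkey : μ * (1 + c * p₁ / B₁) + (1 - μ) * (1 + c * p₂ / B₂)
      = 1 + c * ((1 - l) * p₁ + l * p₂) / Bb := by
    rw [hμ', hμdef]
    field_simp
    ring
  rw [smul_eq_mul, smul_eq_mul, smul_eq_mul, smul_eq_mul, hkey] at hlog
  have hlog2 : (0:ℝ) < Real.log 2 := Real.log_pos one_lt_two
  have e₁ : (1 - l) * (B₁ * Real.logb 2 (1 + c * p₁ / B₁))
      = Bb * (μ * Real.log (1 + c * p₁ / B₁)) / Real.log 2 := by
    rw [Real.logb, hμdef]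
    field_simp
  have e₂ : l * (B₂ * Real.logb 2 (1 + c * p₂ / B₂))
      = Bb * ((1 - μ) * Real.log (1 + c * p₂ / B₂)) / Real.log 2 := by
    rw [Real.logb, hμ']
    field_simp
  rw [e₁, e₂, ← add_div, Real.logb]
  rw [show Bb * (Real.log (1 + c * ((1 - l) * p₁ + l * p₂) / Bb) / Real.log 2)
      = Bb * Real.log (1 + c * ((1 - l) * p₁ + l * p₂) / Bb) / Real.log 2 from
    (mul_div_assoc _ _ _).symm]
  refine (div_le_div_iff_of_pos_right hlog2).2 ?_
  nlinarith [mul_le_mul_of_nonneg_left hlog hBb.le]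


/-- If (p*, B*, β*) solves the epigraph form SP2_v1 of the sum-of-ratios
problem, then with νₙ* = w/Gₙ(pₙ*, Bₙ*) and β̂ₙ = pₙ*·dₙ/Gₙ(pₙ*, Bₙ*), the point
(p*, B*) minimizes the subtractive-form objective Σₙ νₙ*·(pₙ·dₙ − β̂ₙ·Gₙ(pₙ, Bₙ))
over the feasible set S. -/
theorem sp2_epigraph_to_subtractive (N : ℕ) (hN : 1 ≤ N)
    (g d rmin pmin pmax : Fin N → ℝ) (N0 Btot w : ℝ)
    (hg : ∀ n, 0 < g n) (hN0 : 0 < N0) (hd : ∀ n, 0 < d n) (hrmin : ∀ n, 0 < rmin n)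
    (hpmin : ∀ n, 0 ≤ pmin n) (hpm : ∀ n, pmin n ≤ pmax n)
    (hBtot : 0 < Btot) (hw : 0 < w)
    (G : Fin N → ℝ → ℝ → ℝ)
    (hG : ∀ n p B, G n p B = B * Real.logb 2 (1 + g n * p / (N0 * B)))
    (S : Set ((Fin N → ℝ) × (Fin N → ℝ)))
    (hS : S = {pB | (∀ n, pmin n ≤ pB.1 n ∧ pB.1 n ≤ pmax n ∧ 0 < pB.2 n ∧
                      rmin n ≤ G n (pB.1 n) (pB.2 n)) ∧ (∑ n, pB.2 n) ≤ Btot})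
    (pstar Bstar βstar : Fin N → ℝ)
    (hfeas : (pstar, Bstar) ∈ S)
    (hepi : ∀ n, pstar n * d n - βstar n * G n (pstar n) (Bstar n) ≤ 0)
    (hmin : ∀ (p B β : Fin N → ℝ), (p, B) ∈ S →
        (∀ n, p n * d n - β n * G n (p n) (B n) ≤ 0) →
        w * ∑ n, βstar n ≤ w * ∑ n, β n)
    (νstar βhat : Fin N → ℝ)
    (hν : ∀ n, νstar n = w / G n (pstar n) (Bstar n))
    (hβ : ∀ n, βhat n = pstar n * d n / G n (pstar n) (Bstar n)) :
    ∀ (p B : Fin N → ℝ), (p, B) ∈ S →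
      ∑ n, νstar n * (pstar n * d n - βhat n * G n (pstar n) (Bstar n)) ≤
        ∑ n, νstar n * (p n * d n - βhat n * G n (p n) (B n)) := by
  intro p B hmem
  rw [hS] at hfeas hmem
  have hfc : ∀ n, pmin n ≤ pstar n ∧ pstar n ≤ pmax n ∧ 0 < Bstar n ∧
      rmin n ≤ G n (pstar n) (Bstar n) := hfeas.1
  have hfB : (∑ n, Bstar n) ≤ Btot := hfeas.2
  have hmc : ∀ n, pmin n ≤ p n ∧ p n ≤ pmax n ∧ 0 < B n ∧
      rmin n ≤ G n (p n) (B n) := hmem.1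
  have hmB : (∑ n, B n) ≤ Btot := hmem.2
  have hgs : ∀ n, 0 < G n (pstar n) (Bstar n) :=
    fun n => (hrmin n).trans_le (hfc n).2.2.2
  have hgb : ∀ n, 0 < G n (p n) (B n) :=
    fun n => (hrmin n).trans_le (hmc n).2.2.2
  -- LHS is zero
  have hL : ∑ n, νstar n * (pstar n * d n - βhat n * G n (pstar n) (Bstar n)) = 0 := by
    refine Finset.sum_eq_zero fun n _ => ?_
    rw [hβ n, div_mul_cancel₀ _ (hgs n).ne']
    ring
  rw [hL]
  by_contra hT
  push_neg at hT
  -- abbreviations via pointwise equations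
  obtain ⟨a, ha⟩ : ∃ a : Fin N → ℝ, ∀ n,
      a n = p n * d n * G n (pstar n) (Bstar n) - pstar n * d n * G n (p n) (B n) :=
    ⟨_, fun n => rfl⟩
  obtain ⟨F0, hF0def⟩ : ∃ F0 : ℝ, F0 = ∑ n, a n / G n (pstar n) (Bstar n) ^ 2 := ⟨_, rfl⟩
  obtain ⟨C, hCdef⟩ : ∃ C : ℝ, C = ∑ n, |a n| * |G n (pstar n) (Bstar n) - G n (p n) (B n)| /
      (G n (pstar n) (Bstar n) ^ 2 * rmin n) := ⟨_, rfl⟩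
  -- T = w * F0, so F0 < 0
  have hTF : ∑ n, νstar n * (p n * d n - βhat n * G n (p n) (B n)) = w * F0 := by
    rw [hF0def, Finset.mul_sum]
    refine Finset.sum_congr rfl fun n _ => ?_
    rw [hν n, hβ n, ha n]
    have h1 : G n (pstar n) (Bstar n) ≠ 0 := (hgs n).ne'
    field_simp
  have hF0 : F0 < 0 := by
    rw [hTF] at hT
    nlinarith
  have hC0 : 0 ≤ C := by
    rw [hCdef]
    refine Finset.sum_nonneg fun n _ => div_nonneg (by positivity)
      (mul_nonneg (sq_nonneg _) (hrmin n).le)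
  -- choice of lambda
  obtain ⟨l, hldef⟩ : ∃ l : ℝ, l = min 1 (-F0 / (C + 1)) := ⟨_, rfl⟩
  have hC1 : (0:ℝ) < C + 1 := by linarith
  have hl0 : 0 < l := by
    rw [hldef]
    exact lt_min one_pos (div_pos (by linarith) hC1)
  have hl1 : l ≤ 1 := hldef ▸ min_le_left _ _
  have hlC : F0 + l * C < 0 := by
    have h2 : l ≤ -F0 / (C + 1) := hldef ▸ min_le_right _ _
    have h3 : l * (C + 1) ≤ -F0 := (le_div_iff₀ hC1).1 h2
    nlinarith
  -- the perturbed point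
  obtain ⟨pl, hpl⟩ : ∃ pl : Fin N → ℝ, ∀ n, pl n = (1 - l) * pstar n + l * p n :=
    ⟨_, fun n => rfl⟩
  obtain ⟨Bl, hBl⟩ : ∃ Bl : Fin N → ℝ, ∀ n, Bl n = (1 - l) * Bstar n + l * B n :=
    ⟨_, fun n => rfl⟩
  obtain ⟨Gl, hGl⟩ : ∃ Gl : Fin N → ℝ, ∀ n,
      Gl n = (1 - l) * G n (pstar n) (Bstar n) + l * G n (p n) (B n) := ⟨_, fun n => rfl⟩
  have hGlr : ∀ n, rmin n ≤ Gl n := by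
    intro n
    have h1 := (hfc n).2.2.2
    have h2 := (hmc n).2.2.2
    rw [hGl n]
    nlinarith
  have hGl0 : ∀ n, 0 < Gl n := fun n => (hrmin n).trans_le (hGlr n)
  have hBl0 : ∀ n, 0 < Bl n := by
    intro n
    have h1 := (hfc n).2.2.1
    have h2 := (hmc n).2.2.1
    rw [hBl n]
    nlinarith
  have hpl0 : ∀ n, 0 ≤ pl n := by
    intro n
    have h1 := (hfc n).1
    have h2 := (hmc n).1
    have h3 := hpmin n
    rw [hpl n]
    nlinarith
  -- concavity: Gl n ≤ G at the perturbed point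
  have hconc : ∀ n, Gl n ≤ G n (pl n) (Bl n) := by
    intro n
    have hc : 0 < g n / N0 := div_pos (hg n) hN0
    have hGc : ∀ pp BB : ℝ, BB ≠ 0 →
        G n pp BB = BB * Real.logb 2 (1 + g n / N0 * pp / BB) := by
      intro pp BB hBB
      rw [hG]
      have : g n * pp / (N0 * BB) = g n / N0 * pp / BB := by
        field_simp
      rw [this]
    have key := G_concave_seg (g n / N0) hc (pstar n) (p n) (Bstar n) (B n) l
      (le_trans (hpmin n) (hfc n).1) (le_trans (hpmin n) (hmc n).1)
      (hfc n).2.2.1 (hmc n).2.2.1 hl0.le hl1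
    rw [hGl n, hpl n, hBl n,
        hGc (pstar n) (Bstar n) (hfc n).2.2.1.ne',
        hGc (p n) (B n) (hmc n).2.2.1.ne',
        hGc ((1 - l) * pstar n + l * p n) ((1 - l) * Bstar n + l * B n)
          (by rw [← hBl n]; exact (hBl0 n).ne')]
    exact key
  have hGp : ∀ n, 0 < G n (pl n) (Bl n) := fun n => (hGl0 n).trans_le (hconc n)
  -- feasibility of the perturbed point
  have hfeasl : (pl, Bl) ∈ S := by
    rw [hS]
    refine ⟨fun n => ?_, ?_⟩
    · have h1 := (hfc n).1
      have h2 := (hmc n).1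
      have h3 := (hfc n).2.1
      have h4 := (hmc n).2.1
      refine ⟨?_, ?_, hBl0 n, (hGlr n).trans (hconc n)⟩
      · show pmin n ≤ pl n
        rw [hpl n]; nlinarith
      · show pl n ≤ pmax n
        rw [hpl n]; nlinarith
    · show (∑ n, Bl n) ≤ Btot
      have : ∀ n ∈ Finset.univ, Bl n = (1 - l) * Bstar n + l * B n := fun n _ => hBl n
      rw [Finset.sum_congr rfl this, Finset.sum_add_distrib, ← Finset.mul_sum, ← Finset.mul_sum]
      nlinarith
  -- apply optimality at the perturbed point
  obtain ⟨βl, hβl⟩ : ∃ βl : Fin N → ℝ, ∀ n,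
      βl n = pl n * d n / G n (pl n) (Bl n) := ⟨_, fun n => rfl⟩
  have hopt := hmin pl Bl βl hfeasl (by
    intro n
    rw [hβl n, div_mul_cancel₀ _ (hGp n).ne']
    simp)
  have hsum1 : ∑ n, βstar n ≤ ∑ n, βl n := le_of_mul_le_mul_left hopt hw
  -- βhat ≤ βstar termwise
  have hsum0 : ∑ n, βhat n ≤ ∑ n, βstar n := by
    refine Finset.sum_le_sum fun n _ => ?_
    rw [hβ n, div_le_iff₀ (hgs n)]
    have := hepi n
    linarith
  -- the key upper bound on each βl n
  have hterm : ∀ n, βl n ≤ βhat n + l * (a n / G n (pstar n) (Bstar n) ^ 2)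
      + l ^ 2 * (|a n| * |G n (pstar n) (Bstar n) - G n (p n) (B n)| /
          (G n (pstar n) (Bstar n) ^ 2 * rmin n)) := by
    intro n
    have hgsn := hgs n
    have hgbn := hgb n
    have hGln := hGl0 n
    have h1 : βl n ≤ pl n * d n / Gl n := by
      rw [hβl n]
      exact div_le_div₀ (mul_nonneg (hpl0 n) (hd n).le) le_rfl hGln (hconc n)
    have h2 : pl n * d n / Gl n
        = βhat n + l * (a n / G n (pstar n) (Bstar n) ^ 2)
          + l ^ 2 * (a n * (G n (pstar n) (Bstar n) - G n (p n) (B n)) /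
              (G n (pstar n) (Bstar n) ^ 2 * Gl n)) := by
      rw [hβ n, hpl n, ha n, hGl n]
      have hGln' : (1 - l) * G n (pstar n) (Bstar n) + l * G n (p n) (B n) ≠ 0 := by
        rw [← hGl n]; exact hGln.ne'
      field_simp
      ring
    have h3 : a n * (G n (pstar n) (Bstar n) - G n (p n) (B n)) /
          (G n (pstar n) (Bstar n) ^ 2 * Gl n)
        ≤ |a n| * |G n (pstar n) (Bstar n) - G n (p n) (B n)| /
          (G n (pstar n) (Bstar n) ^ 2 * rmin n) := by
      have hx : a n * (G n (pstar n) (Bstar n) - G n (p n) (B n))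
          ≤ |a n| * |G n (pstar n) (Bstar n) - G n (p n) (B n)| :=
        (le_abs_self _).trans_eq (abs_mul _ _)
      exact div_le_div₀ (by positivity) hx
        (mul_pos (pow_pos hgsn 2) (hrmin n))
        (mul_le_mul_of_nonneg_left (hGlr n) (sq_nonneg _))
    calc βl n ≤ pl n * d n / Gl n := h1
      _ = _ := h2
      _ ≤ _ := by
          have h4 := mul_le_mul_of_nonneg_left h3 (sq_nonneg l)
          linarith
  have hsum2 : ∑ n, βl n ≤ ∑ n, βhat n + l * F0 + l ^ 2 * C := by
    calc ∑ n, βl n ≤ ∑ n, (βhat n + l * (a n / G n (pstar n) (Bstar n) ^ 2)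
        + l ^ 2 * (|a n| * |G n (pstar n) (Bstar n) - G n (p n) (B n)| /
            (G n (pstar n) (Bstar n) ^ 2 * rmin n))) :=
          Finset.sum_le_sum fun n _ => hterm n
      _ = _ := by
          rw [Finset.sum_add_distrib, Finset.sum_add_distrib, ← Finset.mul_sum,
            ← Finset.mul_sum, hF0def, hCdef]
  -- contradiction
  have hfin : l * F0 + l ^ 2 * C < 0 := by nlinarith
  linarith
end

section
/- Let ν > 0, β ≥ 0, τ > 0, d > 0, g > 0, N₀ > 0, r^min > 0, B > 0 and p > 0, and set ϑ = p·g/(N₀·B) and Λ = (ν·β + τ)·g/(N₀·d·ν·ln 2). Suppose the KKT stationarity condition ν·(d − β·g/(N₀·(1+ϑ)·ln 2)) − τ·g/(N₀·(1+ϑ)·ln 2) = 0 holds together with the active rate constraint B·log₂(1+ϑ) = r^min. Then p = (Λ − 1)·N₀·B/g and B = r^min / log₂(Λ). -/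
/-- Under the KKT stationarity condition and the active minimum-rate
constraint (the τ ≠ 0 case), the closed-form expressions
p = (Λ − 1)·N₀·B/g and B = r^min / log₂ Λ hold, where
Λ = (ν·β + τ)·g/(N₀·d·ν·ln 2) and ϑ = p·g/(N₀·B). -/
theorem kkt_active_rate_closed_form (ν β τ d g N0 rmin B p : ℝ)
    (hν : 0 < ν) (hβ : 0 ≤ β) (hτ : 0 < τ) (hd : 0 < d) (hg : 0 < g)
    (hN0 : 0 < N0) (hrmin : 0 < rmin) (hB : 0 < B) (hp : 0 < p)
    (ϑ Λ : ℝ)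
    (hϑ : ϑ = p * g / (N0 * B))
    (hΛ : Λ = (ν * β + τ) * g / (N0 * d * ν * Real.log 2))
    (hstat : ν * (d - β * g / (N0 * (1 + ϑ) * Real.log 2))
              - τ * g / (N0 * (1 + ϑ) * Real.log 2) = 0)
    (hrate : B * Real.logb 2 (1 + ϑ) = rmin) :
    p = (Λ - 1) * N0 * B / g ∧ B = rmin / Real.logb 2 Λ := by
  have hln2 : 0 < Real.log 2 := Real.log_pos (by norm_num)
  have hϑpos : 0 < ϑ := by rw [hϑ]; positivity
  have h1ϑ : (0:ℝ) < 1 + ϑ := by linarith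
  have hΛeq : Λ = 1 + ϑ := by
    rw [hΛ]
    rw [div_eq_iff (by positivity)]
    field_simp at hstat
    nlinarith [hstat]
  constructor
  · rw [hΛeq]
    rw [hϑ]
    field_simp
    ring
  · rw [hΛeq]
    have hlog : 0 < Real.logb 2 (1 + ϑ) := Real.logb_pos (by norm_num) (by linarith)
    rw [← hrate]
    field_simp
end

section
/- Let N ≥ 1 and let w₁ > 0, w₂ ≥ 0, κ > 0, R_g > 0, R_l > 0, and for each n let cₙ > 0, Dₙ > 0 and Tₙ^up ≥ 0. Let λ ∈ ℝᴺ satisfy λₙ ≥ 0 for all n and Σₙ λₙ = w₂·R_g. Then for every f ∈ ℝᴺ with fₙ > 0 and every 𝒯 ∈ ℝ such that R_l·cₙ·Dₙ/fₙ + Tₙ^up ≤ 𝒯 for all n, the primal objective satisfies w₁·R_g·Σₙ κ·R_l·cₙ·Dₙ·fₙ² + w₂·R_g·𝒯 ≥ Σₙ [(2^{−2/3} + 2^{1/3})·R_l·(w₁·κ·R_g)^{1/3}·cₙ·Dₙ·λₙ^{2/3} + Tₙ^up·λₙ]. -/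
lemma amgm_cube (b v : ℝ) (hb : 0 ≤ b) (hv : 0 ≤ v) :
    3 * b * v ^ 2 ≤ b ^ 3 + 2 * v ^ 3 := by
  nlinarith [mul_nonneg (sq_nonneg (b - v)) hv, mul_nonneg (sq_nonneg (b - v)) hb]

lemma key_ineq (A B x : ℝ) (hA : 0 ≤ A) (hB : 0 ≤ B) (hx : 0 < x) :
    3 * (2:ℝ) ^ (-(2:ℝ)/3) * A ^ ((1:ℝ)/3) * B ^ ((2:ℝ)/3) ≤ A * x ^ 2 + B / x := by
  set p := (2:ℝ) ^ (-(2:ℝ)/3) with hp_def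
  set u := A ^ ((1:ℝ)/3) with hu_def
  set v := B ^ ((1:ℝ)/3) with hv_def
  set w := (2:ℝ) ^ ((1:ℝ)/3) with hw_def
  have hu : 0 ≤ u := Real.rpow_nonneg hA _
  have hv : 0 ≤ v := Real.rpow_nonneg hB _
  have hw : 0 < w := Real.rpow_pos_of_pos (by norm_num) _
  have hA3 : u ^ 3 = A := by
    rw [hu_def, ← Real.rpow_natCast (A ^ ((1:ℝ)/3)) 3, ← Real.rpow_mul hA]
    norm_num
  have hB3 : v ^ 3 = B := by
    rw [hv_def, ← Real.rpow_natCast (B ^ ((1:ℝ)/3)) 3, ← Real.rpow_mul hB]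
    norm_num
  have hw3 : w ^ 3 = 2 := by
    rw [hw_def, ← Real.rpow_natCast ((2:ℝ) ^ ((1:ℝ)/3)) 3, ← Real.rpow_mul (by norm_num)]
    norm_num
  have hB23 : B ^ ((2:ℝ)/3) = v ^ 2 := by
    rw [hv_def, ← Real.rpow_natCast (B ^ ((1:ℝ)/3)) 2, ← Real.rpow_mul hB]
    norm_num
  have hpw : p * w ^ 2 = 1 := by
    rw [hp_def, hw_def, ← Real.rpow_natCast ((2:ℝ) ^ ((1:ℝ)/3)) 2, ← Real.rpow_mul (by norm_num),
      ← Real.rpow_add (by norm_num)]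
    norm_num
  rw [← hA3, hB23, ← hB3]
  have hrhs : u ^ 3 * x ^ 2 + v ^ 3 / x = (u ^ 3 * x ^ 3 + v ^ 3) / x := by
    field_simp
  rw [hrhs, le_div_iff₀ hx]
  have K := amgm_cube (w * u * x) v (mul_nonneg (mul_nonneg hw.le hu) hx.le) hv
  have e : (w * u * x) ^ 3 = 2 * (u ^ 3 * x ^ 3) := by
    rw [mul_pow, mul_pow, hw3]; ring
  rw [e] at K
  have K2 := mul_le_mul_of_nonneg_left K (sq_nonneg w)
  have e2 : w ^ 2 * (3 * (w * u * x) * v ^ 2) = 6 * (u * x * v ^ 2) := by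
    linear_combination (3 * u * x * v ^ 2) * hw3
  rw [← mul_le_mul_iff_of_pos_right (pow_pos hw 2)]
  have e3 : 3 * p * u * v ^ 2 * x * w ^ 2 = 3 * (u * x * v ^ 2) := by
    linear_combination (3 * u * v ^ 2 * x) * hpw
  rw [e3]
  nlinarith [K2, e2]

lemma key_applied (K E l x : ℝ) (hK : 0 < K) (hE : 0 < E) (hl : 0 ≤ l) (hx : 0 < x) :
    3 * (2:ℝ) ^ (-(2:ℝ)/3) * K ^ ((1:ℝ)/3) * E * l ^ ((2:ℝ)/3)
      ≤ K * E * x ^ 2 + E * l / x := by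
  have h := key_ineq (K * E) (E * l) x (mul_pos hK hE).le (mul_nonneg hE.le hl) hx
  have e1 : (K * E) ^ ((1:ℝ)/3) = K ^ ((1:ℝ)/3) * E ^ ((1:ℝ)/3) := Real.mul_rpow hK.le hE.le
  have e2 : (E * l) ^ ((2:ℝ)/3) = E ^ ((2:ℝ)/3) * l ^ ((2:ℝ)/3) := Real.mul_rpow hE.le hl
  have e3 : E ^ ((1:ℝ)/3) * E ^ ((2:ℝ)/3) = E := by
    rw [← Real.rpow_add hE]; norm_num
  rw [e1, e2] at h
  calc 3 * (2:ℝ) ^ (-(2:ℝ)/3) * K ^ ((1:ℝ)/3) * E * l ^ ((2:ℝ)/3)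
      = 3 * (2:ℝ) ^ (-(2:ℝ)/3) * (K ^ ((1:ℝ)/3) * E ^ ((1:ℝ)/3)) * (E ^ ((2:ℝ)/3) * l ^ ((2:ℝ)/3)) := by
        linear_combination (3 * (2:ℝ) ^ (-(2:ℝ)/3) * K ^ ((1:ℝ)/3) * l ^ ((2:ℝ)/3)) * e3.symm
    _ ≤ K * E * x ^ 2 + E * l / x := h

/-- Weak duality for Subproblem 1: for any dual multipliers λ ≥ 0 with
Σₙ λₙ = w₂·R_g, and any primal-feasible CPU frequencies f > 0 and completion time 𝒯
(R_l·cₙ·Dₙ/fₙ + Tₙ^up ≤ 𝒯 for all n), the primal objective dominates the dual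
objective. -/
theorem subproblem1_weak_duality (N : ℕ) (hN : 1 ≤ N)
    (w1 w2 κ Rg Rl : ℝ)
    (hw1 : 0 < w1) (hw2 : 0 ≤ w2) (hκ : 0 < κ) (hRg : 0 < Rg) (hRl : 0 < Rl)
    (c D Tup : Fin N → ℝ)
    (hc : ∀ n, 0 < c n) (hD : ∀ n, 0 < D n) (hTup : ∀ n, 0 ≤ Tup n)
    (lam : Fin N → ℝ) (hlam : ∀ n, 0 ≤ lam n) (hsum : ∑ n, lam n = w2 * Rg) :
    ∀ (f : Fin N → ℝ) (T : ℝ), (∀ n, 0 < f n) →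
      (∀ n, Rl * c n * D n / f n + Tup n ≤ T) →
      ∑ n, (((2 : ℝ) ^ (-(2 : ℝ) / 3) + (2 : ℝ) ^ ((1 : ℝ) / 3))
              * Rl * (w1 * κ * Rg) ^ ((1 : ℝ) / 3) * c n * D n * lam n ^ ((2 : ℝ) / 3)
            + Tup n * lam n)
        ≤ w1 * Rg * ∑ n, κ * Rl * c n * D n * f n ^ 2 + w2 * Rg * T := by
  intro f T hf hT
  have hcoef : (2:ℝ) ^ (-(2:ℝ)/3) + (2:ℝ) ^ ((1:ℝ)/3) = 3 * (2:ℝ) ^ (-(2:ℝ)/3) := by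
    have h1 : (2:ℝ) ^ ((1:ℝ)/3) = 2 * (2:ℝ) ^ (-(2:ℝ)/3) := by
      rw [show (2:ℝ) * (2:ℝ) ^ (-(2:ℝ)/3) = (2:ℝ) ^ (1:ℝ) * (2:ℝ) ^ (-(2:ℝ)/3) by
        rw [Real.rpow_one], ← Real.rpow_add (by norm_num)]
      norm_num
    linarith
  have main : ∀ n : Fin N,
      ((2:ℝ) ^ (-(2:ℝ)/3) + (2:ℝ) ^ ((1:ℝ)/3)) * Rl * (w1 * κ * Rg) ^ ((1:ℝ)/3)
          * c n * D n * lam n ^ ((2:ℝ)/3) + Tup n * lam n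
        ≤ w1 * Rg * (κ * Rl * c n * D n * f n ^ 2) + lam n * T := by
    intro n
    have hk := key_applied (w1 * κ * Rg) (Rl * c n * D n) (lam n) (f n)
      (mul_pos (mul_pos hw1 hκ) hRg) (mul_pos (mul_pos hRl (hc n)) (hD n)) (hlam n) (hf n)
    have hT' : lam n * (Rl * c n * D n / f n + Tup n) ≤ lam n * T :=
      mul_le_mul_of_nonneg_left (hT n) (hlam n)
    have ee : Rl * c n * D n * lam n / f n + Tup n * lam n
        = lam n * (Rl * c n * D n / f n + Tup n) := by ring
    calc ((2:ℝ) ^ (-(2:ℝ)/3) + (2:ℝ) ^ ((1:ℝ)/3)) * Rl * (w1 * κ * Rg) ^ ((1:ℝ)/3)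
          * c n * D n * lam n ^ ((2:ℝ)/3) + Tup n * lam n
        = 3 * (2:ℝ) ^ (-(2:ℝ)/3) * (w1 * κ * Rg) ^ ((1:ℝ)/3) * (Rl * c n * D n)
            * lam n ^ ((2:ℝ)/3) + Tup n * lam n := by rw [hcoef]; ring
      _ ≤ (w1 * κ * Rg) * (Rl * c n * D n) * f n ^ 2 + Rl * c n * D n * lam n / f n
            + Tup n * lam n := by linarith [hk]
      _ ≤ w1 * Rg * (κ * Rl * c n * D n * f n ^ 2) + lam n * T := by
          nlinarith [hT', ee]
  calc ∑ n, (((2 : ℝ) ^ (-(2 : ℝ) / 3) + (2 : ℝ) ^ ((1 : ℝ) / 3))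
              * Rl * (w1 * κ * Rg) ^ ((1 : ℝ) / 3) * c n * D n * lam n ^ ((2 : ℝ) / 3)
            + Tup n * lam n)
      ≤ ∑ n, (w1 * Rg * (κ * Rl * c n * D n * f n ^ 2) + lam n * T) :=
        Finset.sum_le_sum fun n _ => main n
    _ = w1 * Rg * ∑ n, κ * Rl * c n * D n * f n ^ 2 + w2 * Rg * T := by
        rw [Finset.sum_add_distrib, ← Finset.mul_sum, ← Finset.sum_mul, hsum]
end

section
/- Let g > 0, N₀ > 0 and r ∈ ℝ. The set {(p, B) ∈ ℝ² : p ≥ 0, B > 0, and B·log₂(1 + g·p/(N₀·B)) ≥ r} is convex. -/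
/-- The minimum-rate constraint set
{(p, B) : p ≥ 0, B > 0, B·log₂(1 + g·p/(N₀·B)) ≥ r} is convex for g > 0, N₀ > 0. -/
theorem min_rate_constraint_set_convex (g N0 r : ℝ) (hg : 0 < g) (hN0 : 0 < N0) :
    Convex ℝ {x : ℝ × ℝ | 0 ≤ x.1 ∧ 0 < x.2 ∧
      r ≤ x.2 * Real.logb 2 (1 + g * x.1 / (N0 * x.2))} := by
  rintro ⟨p1, B1⟩ ⟨hp1, hB1, hr1⟩ ⟨p2, B2⟩ ⟨hp2, hB2, hr2⟩ a b ha hb hab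
  simp only [Set.mem_setOf_eq, Prod.smul_mk, Prod.mk_add_mk, smul_eq_mul] at *
  have hB : 0 < a * B1 + b * B2 := by
    have h1 : min B1 B2 ≤ B1 := min_le_left _ _
    have h2 : min B1 B2 ≤ B2 := min_le_right _ _
    have hm : 0 < min B1 B2 := lt_min hB1 hB2
    nlinarith
  refine ⟨by positivity, hB, ?_⟩
  set B := a * B1 + b * B2 with hBdef
  set P := a * p1 + b * p2 with hPdef
  have hBne : B ≠ 0 := hB.ne'
  have hu1 : (0:ℝ) < 1 + g * p1 / (N0 * B1) := by positivity
  have hu2 : (0:ℝ) < 1 + g * p2 / (N0 * B2) := by positivity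
  have ht1 : 0 ≤ a * B1 / B := by positivity
  have ht2 : 0 ≤ b * B2 / B := by positivity
  have htsum : a * B1 / B + b * B2 / B = 1 := by field_simp; exact hBdef.symm
  have hconc := strictConcaveOn_log_Ioi.concaveOn.2 (Set.mem_Ioi.mpr hu1)
    (Set.mem_Ioi.mpr hu2) ht1 ht2 htsum
  simp only [smul_eq_mul] at hconc
  have hcomb : a * B1 / B * (1 + g * p1 / (N0 * B1)) + b * B2 / B * (1 + g * p2 / (N0 * B2))
      = 1 + g * P / (N0 * B) := by
    field_simp
    ring
  rw [hcomb] at hconc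
  have hlog2 : (0:ℝ) < Real.log 2 := Real.log_pos one_lt_two
  set L1 := Real.log (1 + g * p1 / (N0 * B1))
  set L2 := Real.log (1 + g * p2 / (N0 * B2))
  set L := Real.log (1 + g * P / (N0 * B))
  have key' : a * B1 * L1 + b * B2 * L2 ≤ B * L := by
    have h := mul_le_mul_of_nonneg_left hconc hB.le
    calc a * B1 * L1 + b * B2 * L2
        = B * (a * B1 / B * L1 + b * B2 / B * L2) := by field_simp
      _ ≤ B * L := h
  have key : a * (B1 * Real.logb 2 (1 + g * p1 / (N0 * B1)))
      + b * (B2 * Real.logb 2 (1 + g * p2 / (N0 * B2)))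
      ≤ B * Real.logb 2 (1 + g * P / (N0 * B)) := by
    simp only [Real.logb]
    rw [show a * (B1 * (L1 / Real.log 2)) + b * (B2 * (L2 / Real.log 2))
        = (a * B1 * L1 + b * B2 * L2) / Real.log 2 by ring,
      show B * (L / Real.log 2) = (B * L) / Real.log 2 by ring]
    exact div_le_div_of_nonneg_right key' hlog2.le |>.trans_eq rfl
  have h1 : a * r ≤ a * (B1 * Real.logb 2 (1 + g * p1 / (N0 * B1))) :=
    mul_le_mul_of_nonneg_left hr1 ha
  have h2 : b * r ≤ b * (B2 * Real.logb 2 (1 + g * p2 / (N0 * B2))) :=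
    mul_le_mul_of_nonneg_left hr2 hb
  have hr : a * r + b * r = r := by rw [← add_mul, hab, one_mul]
  linarith [key, h1, h2]
end

section
/- Let B > 0, ν > 0, β ≥ 0, d > 0, g > 0, N₀ > 0, and 0 ≤ p^min ≤ p^max. Define φ(p) = ν·(p·d − β·B·log₂(1 + p·g/(N₀·B))) for p ≥ 0, and let p̂ = min(p^max, max((β·g/(N₀·d·ln 2) − 1)·N₀·B/g, p^min)). Then for every p with p^min ≤ p ≤ p^max, φ(p̂) ≤ φ(p). -/
private lemma clamped_hasDeriv (B β d g N0 : ℝ) (hB : 0 < B) (hg : 0 < g) (hN0 : 0 < N0)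
    (x : ℝ) (hx : 0 ≤ x) :
    HasDerivAt (fun p : ℝ => p * d - β * (B * Real.logb 2 (1 + p * g / (N0 * B))))
      (d - β * B * g / ((N0 * B + x * g) * Real.log 2)) x := by
  have hNB : (0:ℝ) < N0 * B := by positivity
  have hpos : 0 < 1 + x * g / (N0 * B) := by positivity
  have hL : 0 < Real.log 2 := Real.log_pos (by norm_num)
  have h2 : HasDerivAt (fun p : ℝ => 1 + p * g / (N0 * B)) (g / (N0 * B)) x := by
    simpa [mul_div_assoc] using ((hasDerivAt_id x).mul_const (g / (N0 * B))).const_add 1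
  have h3 := h2.log hpos.ne'
  have h4 : HasDerivAt (fun p : ℝ => p * d) d x := by
    simpa using (hasDerivAt_id x).mul_const d
  have h6 := h4.sub (((h3.div_const (Real.log 2)).const_mul B).const_mul β)
  have he : d - β * (B * (g / (N0 * B) / (1 + x * g / (N0 * B)) / Real.log 2))
      = d - β * B * g / ((N0 * B + x * g) * Real.log 2) := by
    field_simp
  rw [he] at h6
  simpa [Real.logb, div_div, Pi.sub_def] using h6

/-- For fixed bandwidth B, the clamped stationary point
p̂ = min(p^max, max((β·g/(N₀·d·ln 2) − 1)·N₀·B/g, p^min)) minimizes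
φ(p) = ν·(p·d − β·B·log₂(1 + p·g/(N₀·B))) over [p^min, p^max]. -/
theorem clamped_power_minimizes (B ν β d g N0 pmin pmax : ℝ)
    (hB : 0 < B) (hν : 0 < ν) (hβ : 0 ≤ β) (hd : 0 < d) (hg : 0 < g) (hN0 : 0 < N0)
    (hpmin : 0 ≤ pmin) (hpm : pmin ≤ pmax)
    (phat : ℝ)
    (hphat : phat = min pmax (max ((β * g / (N0 * d * Real.log 2) - 1) * N0 * B / g) pmin)) :
    ∀ p : ℝ, pmin ≤ p → p ≤ pmax →
      ν * (phat * d - β * (B * Real.logb 2 (1 + phat * g / (N0 * B)))) ≤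
        ν * (p * d - β * (B * Real.logb 2 (1 + p * g / (N0 * B)))) := by
  intro p hp1 hp2
  set Γ : ℝ := (β * g / (N0 * d * Real.log 2) - 1) * N0 * B / g with hΓ
  set f : ℝ → ℝ := fun p => p * d - β * (B * Real.logb 2 (1 + p * g / (N0 * B))) with hf
  have hL : 0 < Real.log 2 := Real.log_pos (by norm_num)
  have hD := clamped_hasDeriv B β d g N0 hB hg hN0
  -- key algebraic identity
  have key : Γ * (g * (d * Real.log 2)) = β * B * g - N0 * B * (d * Real.log 2) := by
    rw [hΓ]; field_simp
  -- sign of derivative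
  have hsign_pos : ∀ x : ℝ, 0 ≤ x → Γ ≤ x →
      0 ≤ d - β * B * g / ((N0 * B + x * g) * Real.log 2) := by
    intro x hx hΓx
    have hden : 0 < (N0 * B + x * g) * Real.log 2 := by positivity
    rw [sub_nonneg, div_le_iff₀ hden]
    nlinarith [mul_le_mul_of_nonneg_right hΓx (by positivity : (0:ℝ) ≤ g * (d * Real.log 2))]
  have hsign_neg : ∀ x : ℝ, 0 ≤ x → x ≤ Γ →
      d - β * B * g / ((N0 * B + x * g) * Real.log 2) ≤ 0 := by
    intro x hx hΓx
    have hden : 0 < (N0 * B + x * g) * Real.log 2 := by positivity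
    rw [sub_nonpos, le_div_iff₀ hden]
    nlinarith [mul_le_mul_of_nonneg_right hΓx (by positivity : (0:ℝ) ≤ g * (d * Real.log 2))]
  -- monotonicity helpers
  have hmono : ∀ a b : ℝ, 0 ≤ a → Γ ≤ a → MonotoneOn f (Set.Icc a b) := by
    intro a b ha hΓa
    apply monotoneOn_of_deriv_nonneg (convex_Icc a b)
    · intro x hx
      exact (hD x (ha.trans hx.1)).continuousAt.continuousWithinAt
    · intro x hx
      rw [interior_Icc] at hx
      exact (hD x (ha.trans hx.1.le)).differentiableAt.differentiableWithinAt
    · intro x hx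
      rw [interior_Icc] at hx
      rw [(hD x (ha.trans hx.1.le)).deriv]
      exact hsign_pos x (ha.trans hx.1.le) (hΓa.trans hx.1.le)
  have hanti : ∀ a b : ℝ, 0 ≤ a → b ≤ Γ → AntitoneOn f (Set.Icc a b) := by
    intro a b ha hbΓ
    apply antitoneOn_of_deriv_nonpos (convex_Icc a b)
    · intro x hx
      exact (hD x (ha.trans hx.1)).continuousAt.continuousWithinAt
    · intro x hx
      rw [interior_Icc] at hx
      exact (hD x (ha.trans hx.1.le)).differentiableAt.differentiableWithinAt
    · intro x hx
      rw [interior_Icc] at hx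
      rw [(hD x (ha.trans hx.1.le)).deriv]
      exact hsign_neg x (ha.trans hx.1.le) (hx.2.le.trans hbΓ)
  suffices h : f phat ≤ f p by
    exact mul_le_mul_of_nonneg_left h hν.le
  rcases le_or_gt Γ pmin with hc1 | hc1
  · -- phat = pmin
    have hph : phat = pmin := by
      rw [hphat, max_eq_right hc1, min_eq_right hpm]
    rw [hph]
    exact hmono pmin pmax hpmin hc1 (Set.left_mem_Icc.mpr hpm) (Set.mem_Icc.mpr ⟨hp1, hp2⟩) hp1
  · rcases le_or_gt pmax Γ with hc2 | hc2
    · -- phat = pmax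
      have hph : phat = pmax := by
        rw [hphat, max_eq_left (hpm.trans hc2), min_eq_left hc2]
      rw [hph]
      exact hanti pmin pmax hpmin hc2 (Set.mem_Icc.mpr ⟨hp1, hp2⟩) (Set.right_mem_Icc.mpr hpm) hp2
    · -- phat = Γ
      have hph : phat = Γ := by
        rw [hphat, max_eq_left hc1.le, min_eq_right hc2.le]
      rw [hph]
      rcases le_or_gt p Γ with hpΓ | hpΓ
      · exact hanti pmin Γ hpmin le_rfl (Set.mem_Icc.mpr ⟨hp1, hpΓ⟩)
          (Set.right_mem_Icc.mpr hc1.le) hpΓ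
      · exact hmono Γ pmax (hpmin.trans hc1.le) le_rfl (Set.left_mem_Icc.mpr hc2.le)
          (Set.mem_Icc.mpr ⟨hpΓ.le, hp2⟩) hpΓ.le
end
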